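/- Let p be an odd prime with p ≡ 3 (mod 8). Then the linear complexity over Z_4 of the quaternary sequence (s_u)_{u≥0} equals 2p - 1. -/

import Mathlib

open Polynomial

/-- The generalized cyclotomic class `D_i = {g^(2n+i) mod 2p : n = 0,...,(p-3)/2}` in `Z_{2p}`. -/
def Dcl (p g : ℕ) (i : ℕ) : Finset (ZMod (2 * p)) :=
  (Finset.range ((p - 1) / 2)).image (fun n => (g : ZMod (2 * p)) ^ (2 * n + i))

/-- The generalized cyclotomic class `E_i = {2u mod 2p : u ∈ D_i}` in `Z_{2p}`. -/
def Ecl (p g : ℕ) (i : ℕ) : Finset (ZMod (2 * p)) :=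
  (Dcl p g i).image (fun u => 2 * u)

/-- The quaternary sequence `(s_u)` over `Z_4` of period `2p`. -/
def seqS (p g : ℕ) (u : ℕ) : ZMod 4 :=
  if (u : ZMod (2 * p)) = 0 ∨ (u : ZMod (2 * p)) ∈ Dcl p g 0 then 0
  else if (u : ZMod (2 * p)) ∈ Dcl p g 1 then 1
  else if (u : ZMod (2 * p)) = (p : ZMod (2 * p)) ∨ (u : ZMod (2 * p)) ∈ Ecl p g 0 then 2
  else 3

/-- The generating polynomial `S(X) = s_0 + s_1 X + ... + s_{2p-1} X^{2p-1} ∈ Z_4[X]`. -/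
noncomputable def genPoly (p g : ℕ) : Polynomial (ZMod 4) :=
  ∑ u ∈ Finset.range (2 * p), Polynomial.C (seqS p g u) * Polynomial.X ^ u

/-- The linear complexity over `Z_4` of the sequence `(s_u)`:
`min{ deg C : C ∈ Z_4[X], C(0) = 1, S(X)C(X) ≡ 0 (mod X^{2p} - 1) }`. -/
noncomputable def linComplexity (p g : ℕ) : ℕ :=
  sInf { L | ∃ C : Polynomial (ZMod 4), C.eval 0 = 1 ∧ C.natDegree = L ∧
      (Polynomial.X ^ (2 * p) - 1) ∣ genPoly p g * C }


lemma QS_pow_mod {M : Type*} [Monoid M] {β : M} {N : ℕ} (h : β ^ N = 1) (a : ℕ) :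
    β ^ a = β ^ (a % N) := by
  conv_lhs => rw [← Nat.div_add_mod a N]
  rw [pow_add, pow_mul, h, one_pow, one_mul]

lemma QS_sum_range {M : Type*} [AddCommMonoid M] {N : ℕ} [NeZero N] (F : ZMod N → M) :
    ∑ u ∈ Finset.range N, F (u : ZMod N) = ∑ x : ZMod N, F x := by
  refine Finset.sum_nbij' (fun u => (u : ZMod N)) (fun x => x.val) ?_ ?_ ?_ ?_ ?_
  · intro a _; exact Finset.mem_univ _
  · intro x _; exact Finset.mem_range.mpr (ZMod.val_lt x)
  · intro a ha
    rw [ZMod.val_natCast, Nat.mod_eq_of_lt (Finset.mem_range.mp ha)]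
  · intro x _; exact ZMod.natCast_rightInverse x
  · intro a _; rfl


lemma QS_unit_of_order {M : Type*} [CommMonoid M] {x : M} {P : ℕ} (h2 : 2 ≤ P)
    (h : orderOf x = P - 1) : IsUnit x := by
  have h1 : x ^ (P - 1) = 1 := by rw [← h]; exact pow_orderOf_eq_one _
  refine IsUnit.of_mul_eq_one (a := x) (x ^ (P - 2)) ?_
  rw [← pow_succ']
  have : P - 2 + 1 = P - 1 := by omega
  rw [this, h1]

lemma QS_pow_inj {G : Type*} [Group G] {x : G} {P : ℕ} (hodd : Odd P)
    (hord : orderOf x = P - 1) {i n m : ℕ} (hn : n < (P - 1) / 2) (hm : m < (P - 1) / 2)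
    (h : x ^ (2 * n + i) = x ^ (2 * m + i)) : n = m := by
  set k := (P - 1) / 2 with hk
  have hP : P % 2 = 1 := Nat.odd_iff.mp hodd
  have h2k : P - 1 = 2 * k := by omega
  have hmod : 2 * n + i ≡ 2 * m + i [MOD P - 1] := by
    rw [← hord]; exact pow_eq_pow_iff_modEq.mp h
  have h1 : 2 * n ≡ 2 * m [MOD 2 * k] := by
    rw [← h2k]; exact Nat.ModEq.add_right_cancel' i hmod
  have h2 : n ≡ m [MOD k] := Nat.ModEq.mul_left_cancel' (by norm_num) h1
  have h3 : n % k = m % k := h2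
  rw [Nat.mod_eq_of_lt hn, Nat.mod_eq_of_lt hm] at h3
  exact h3

section Ctx
variable {p g : ℕ}

lemma QS_val_two_mul (hp : 0 < p) (u : ZMod (2*p)) : (2*u).val = (2 * u.val) % (2*p) := by
  haveI : NeZero (2*p) := ⟨by omega⟩
  conv_lhs => rw [show (2:ZMod (2*p)) = ((2:ℕ) : ZMod (2*p)) by push_cast; rfl,
    show u = ((u.val : ℕ) : ZMod (2*p)) from (ZMod.natCast_rightInverse u).symm]
  rw [← Nat.cast_mul, ZMod.val_natCast]

lemma QS_val_p (hp : 0 < p) : ((p:ℕ) : ZMod (2*p)).val = p := by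
  rw [ZMod.val_natCast, Nat.mod_eq_of_lt (by omega)]

lemma QS_p_not_unit (hp : p.Prime) : ¬ IsUnit ((p:ℕ) : ZMod (2*p)) := by
  rw [ZMod.isUnit_iff_coprime]
  intro h
  have hd : p ∣ 2*p := ⟨2, by ring⟩
  have hg := Nat.gcd_eq_left hd
  rw [Nat.Coprime] at h
  have := hp.two_le
  omega

lemma QS_zero_not_unit (hp : p.Prime) : ¬ IsUnit (0 : ZMod (2*p)) := by
  haveI : Fact (1 < 2*p) := ⟨by have := hp.two_le; omega⟩
  simp

lemma QS_gpow_odd (hp : p.Prime) (hgodd : Odd g) (m : ℕ) :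
    (((g : ZMod (2*p)) ^ m)).val % 2 = 1 := by
  have h : ((g:ZMod (2*p))^m) = ((g^m : ℕ) : ZMod (2*p)) := by push_cast; ring
  rw [h, ZMod.val_natCast, Nat.mod_mod_of_dvd _ ⟨p, rfl⟩]
  exact Nat.odd_iff.mp (hgodd.pow)

lemma QS_Dcl_odd (hp : p.Prime) (hgodd : Odd g) {i : ℕ} {x : ZMod (2*p)}
    (hx : x ∈ Dcl p g i) : x.val % 2 = 1 := by
  obtain ⟨n, _, rfl⟩ := Finset.mem_image.mp hx
  exact QS_gpow_odd hp hgodd _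

lemma QS_gunit (hp : p.Prime) (hg2 : orderOf (g : ZMod (2*p)) = p - 1) :
    IsUnit (g : ZMod (2*p)) := QS_unit_of_order hp.two_le hg2

lemma QS_Dcl_unit (hp : p.Prime) (hg2 : orderOf (g : ZMod (2*p)) = p - 1) {i : ℕ}
    {x : ZMod (2*p)} (hx : x ∈ Dcl p g i) : IsUnit x := by
  obtain ⟨n, _, rfl⟩ := Finset.mem_image.mp hx
  exact (QS_gunit hp hg2).pow _

lemma QS_Ecl_even (hp : p.Prime) {i : ℕ} {x : ZMod (2*p)}
    (hx : x ∈ Ecl p g i) : x.val % 2 = 0 := by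
  obtain ⟨u, _, rfl⟩ := Finset.mem_image.mp hx
  rw [QS_val_two_mul hp.pos, Nat.mod_mod_of_dvd _ ⟨p, rfl⟩, Nat.mul_mod_right]

lemma QS_two_mul_eq_zero (hp : p.Prime) {x : ZMod (2*p)} (h : 2*x = 0) :
    x = 0 ∨ x = ((p:ℕ) : ZMod (2*p)) := by
  haveI : NeZero (2*p) := ⟨by have := hp.pos; omega⟩
  have hv : (2 * x.val) % (2*p) = 0 := by rw [← QS_val_two_mul hp.pos, h, ZMod.val_zero]
  have hdvd : 2*p ∣ 2 * x.val := Nat.dvd_of_mod_eq_zero hv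
  have hpd : p ∣ x.val := (mul_dvd_mul_iff_left (by norm_num : (2:ℕ) ≠ 0)).mp hdvd
  obtain ⟨c, hc⟩ := hpd
  have hlt := ZMod.val_lt x
  have hc2 : c < 2 := by
    by_contra hcon
    push_neg at hcon
    have : p * 2 ≤ p * c := Nat.mul_le_mul_left p hcon
    omega
  have hx' : x = ((x.val : ℕ) : ZMod (2*p)) := (ZMod.natCast_rightInverse x).symm
  interval_cases c
  · left; rw [hx']; simp [hc]  -- x.val = 0
  · right; rw [hx', hc]; norm_num

lemma QS_double_inj (hp : p.Prime) (hpodd : Odd p) {u v : ZMod (2*p)}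
    (hu : u.val % 2 = 1) (hv : v.val % 2 = 1) (h : 2*u = 2*v) : u = v := by
  haveI : NeZero (2*p) := ⟨by have := hp.pos; omega⟩
  have h0 : 2*(u - v) = 0 := by rw [mul_sub, h, sub_self]
  rcases QS_two_mul_eq_zero hp h0 with h1 | h1
  · exact sub_eq_zero.mp h1
  · exfalso
    have huv : u = v + ((p:ℕ) : ZMod (2*p)) := by
      rw [← h1]; ring
    have hval : u.val = (v.val + ((p:ℕ) : ZMod (2*p)).val) % (2*p) := by
      rw [huv, ZMod.val_add]
    rw [QS_val_p hp.pos] at hval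
    have hpodd' : p % 2 = 1 := Nat.odd_iff.mp hpodd
    have : u.val % 2 = (v.val + p) % 2 := by
      rw [hval, Nat.mod_mod_of_dvd _ ⟨p, rfl⟩]
    omega

end Ctx

section P4
variable {p g : ℕ}

lemma QS_modeq_of_pow_eq {M : Type*} [CommMonoid M] {x : M} {d : ℕ} (hd : orderOf x = d)
    (hu : IsUnit x) {a b : ℕ} (h : x^a = x^b) : a ≡ b [MOD d] := by
  have hw : orderOf hu.unit = d := by rw [← hd, ← orderOf_units, hu.unit_spec]
  have h' : hu.unit ^ a = hu.unit ^ b := Units.ext (by simpa [hu.unit_spec] using h)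
  rw [← hw]
  exact pow_eq_pow_iff_modEq.mp h'

lemma QS_inj_arith {P n m i : ℕ} (hodd : Odd P) (hn : n < (P-1)/2) (hm : m < (P-1)/2)
    (hmod : 2*n+i ≡ 2*m+i [MOD P-1]) : n = m := by
  set k := (P - 1) / 2 with hk
  have hP : P % 2 = 1 := Nat.odd_iff.mp hodd
  have h2k : P - 1 = 2 * k := by omega
  rw [h2k] at hmod
  have h1 : 2 * n ≡ 2 * m [MOD 2 * k] := Nat.ModEq.add_right_cancel' i hmod
  have h2 : n ≡ m [MOD k] := Nat.ModEq.mul_left_cancel' (by norm_num) h1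
  have h3 : n % k = m % k := h2
  rw [Nat.mod_eq_of_lt hn, Nat.mod_eq_of_lt hm] at h3
  exact h3

lemma QS_parity_arith {P n m : ℕ} (hodd : Odd P) (h3 : 3 ≤ P)
    (hmod : 2*n ≡ 2*m+1 [MOD P-1]) : False := by
  have hP : P % 2 = 1 := Nat.odd_iff.mp hodd
  set k := (P - 1) / 2 with hk
  have h2k : P - 1 = 2 * k := by omega
  have hk1 : 1 ≤ k := by omega
  rw [h2k] at hmod
  have h := congrArg (· % 2) hmod
  simp only [Nat.mod_mod_of_dvd _ (⟨k, rfl⟩ : (2:ℕ) ∣ 2*k)] at h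
  omega

lemma QS_Dcl_injOn (hp : p.Prime) (hpodd : Odd p)
    (hg2 : orderOf (g : ZMod (2*p)) = p - 1) (i : ℕ) {n m : ℕ}
    (hn : n < (p-1)/2) (hm : m < (p-1)/2)
    (h : (g : ZMod (2*p))^(2*n+i) = (g : ZMod (2*p))^(2*m+i)) : n = m :=
  QS_inj_arith hpodd hn hm (QS_modeq_of_pow_eq hg2 (QS_gunit hp hg2) h)

lemma QS_card_Dcl (hp : p.Prime) (hpodd : Odd p)
    (hg2 : orderOf (g : ZMod (2*p)) = p - 1) (i : ℕ) :
    (Dcl p g i).card = (p-1)/2 := by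
  rw [Dcl, Finset.card_image_of_injOn, Finset.card_range]
  intro n hn m hm h
  simp only [Finset.coe_range, Set.mem_Iio] at hn hm
  exact QS_Dcl_injOn hp hpodd hg2 i hn hm h

lemma QS_card_Ecl (hp : p.Prime) (hpodd : Odd p) (hgodd : Odd g)
    (hg2 : orderOf (g : ZMod (2*p)) = p - 1) (i : ℕ) :
    (Ecl p g i).card = (p-1)/2 := by
  rw [Ecl, Finset.card_image_of_injOn, QS_card_Dcl hp hpodd hg2]
  intro u hu v hv h
  exact QS_double_inj hp hpodd (QS_Dcl_odd hp hgodd hu) (QS_Dcl_odd hp hgodd hv) h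

lemma QS_D0_D1_disj (hp : p.Prime) (hpodd : Odd p)
    (hg2 : orderOf (g : ZMod (2*p)) = p - 1) :
    Disjoint (Dcl p g 0) (Dcl p g 1) := by
  rw [Finset.disjoint_left]
  rintro x hx0 hx1
  obtain ⟨n, _, rfl⟩ := Finset.mem_image.mp hx0
  obtain ⟨m, _, hm⟩ := Finset.mem_image.mp hx1
  have h3 : 3 ≤ p := by
    have := hp.two_le; have := Nat.odd_iff.mp hpodd; omega
  have hmod := QS_modeq_of_pow_eq hg2 (QS_gunit hp hg2) hm.symm
  rw [Nat.add_zero] at hmod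
  exact QS_parity_arith hpodd h3 hmod

end P4

section P5
variable {p g : ℕ}

lemma QS_Ecl_ne_zero (hp : p.Prime) (hgodd : Odd g)
    (hg2 : orderOf (g : ZMod (2*p)) = p - 1) {i : ℕ} {x : ZMod (2*p)}
    (hx : x ∈ Ecl p g i) : x ≠ 0 := by
  obtain ⟨u, hu, rfl⟩ := Finset.mem_image.mp hx
  intro h
  rcases QS_two_mul_eq_zero hp h with h1 | h1
  · exact QS_zero_not_unit hp (h1 ▸ QS_Dcl_unit hp hg2 hu)
  · exact QS_p_not_unit hp (h1 ▸ QS_Dcl_unit hp hg2 hu)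

lemma QS_E0_E1_disj (hp : p.Prime) (hpodd : Odd p) (hgodd : Odd g)
    (hg2 : orderOf (g : ZMod (2*p)) = p - 1) :
    Disjoint (Ecl p g 0) (Ecl p g 1) := by
  rw [Finset.disjoint_left]
  rintro x hx0 hx1
  obtain ⟨u, hu, rfl⟩ := Finset.mem_image.mp hx0
  obtain ⟨v, hv, hvu⟩ := Finset.mem_image.mp hx1
  have := QS_double_inj hp hpodd (QS_Dcl_odd hp hgodd hv) (QS_Dcl_odd hp hgodd hu) hvu
  subst this
  exact (Finset.disjoint_left.mp (QS_D0_D1_disj hp hpodd hg2)) hu hv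

lemma QS_sum_univ {M : Type*} [AddCommMonoid M] [NeZero (2*p)] (hp : p.Prime) (hpodd : Odd p)
    (hgodd : Odd g) (hg2 : orderOf (g : ZMod (2*p)) = p - 1)
    (F : ZMod (2*p) → M) :
    ∑ x : ZMod (2*p), F x
      = F 0 + (F ((p:ℕ) : ZMod (2*p)) + ((∑ x ∈ Dcl p g 0, F x + ∑ x ∈ Dcl p g 1, F x)
        + (∑ x ∈ Ecl p g 0, F x + ∑ x ∈ Ecl p g 1, F x))) := by
  classical
  have h3 : 3 ≤ p := by have := hp.two_le; have := Nat.odd_iff.mp hpodd; omega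
  set A := Dcl p g 0 ∪ Dcl p g 1 with hA
  set B := Ecl p g 0 ∪ Ecl p g 1 with hB
  have hAodd : ∀ x ∈ A, x.val % 2 = 1 := by
    intro x hx
    rcases Finset.mem_union.mp hx with h | h
    exacts [QS_Dcl_odd hp hgodd h, QS_Dcl_odd hp hgodd h]
  have hBeven : ∀ x ∈ B, x.val % 2 = 0 := by
    intro x hx
    rcases Finset.mem_union.mp hx with h | h
    exacts [QS_Ecl_even hp h, QS_Ecl_even hp h]
  have hDE : Disjoint A B := by
    rw [Finset.disjoint_left]
    intro x hx hx'
    have := hAodd x hx; have := hBeven x hx'; omega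
  have hD01 := QS_D0_D1_disj hp hpodd hg2
  have hE01 := QS_E0_E1_disj hp hpodd hgodd hg2
  have hpA : ((p:ℕ) : ZMod (2*p)) ∉ A := by
    intro hmem
    rcases Finset.mem_union.mp hmem with h | h
    exacts [QS_p_not_unit hp (QS_Dcl_unit hp hg2 h), QS_p_not_unit hp (QS_Dcl_unit hp hg2 h)]
  have hpB : ((p:ℕ) : ZMod (2*p)) ∉ B := by
    intro hmem
    have := hBeven _ hmem
    rw [QS_val_p hp.pos] at this
    have := Nat.odd_iff.mp hpodd
    omega
  have h0A : (0 : ZMod (2*p)) ∉ A := by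
    intro hmem
    rcases Finset.mem_union.mp hmem with h | h
    exacts [QS_zero_not_unit hp (QS_Dcl_unit hp hg2 h), QS_zero_not_unit hp (QS_Dcl_unit hp hg2 h)]
  have h0B : (0 : ZMod (2*p)) ∉ B := by
    intro hmem
    rcases Finset.mem_union.mp hmem with h | h
    exacts [QS_Ecl_ne_zero hp hgodd hg2 h rfl, QS_Ecl_ne_zero hp hgodd hg2 h rfl]
  have h0p : (0 : ZMod (2*p)) ≠ ((p:ℕ) : ZMod (2*p)) := by
    intro h
    have := congrArg ZMod.val h
    rw [ZMod.val_zero, QS_val_p hp.pos] at this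
    omega
  set U : Finset (ZMod (2*p)) := insert 0 (insert ((p:ℕ) : ZMod (2*p)) (A ∪ B)) with hU
  have hpAB : ((p:ℕ) : ZMod (2*p)) ∉ A ∪ B := by
    rw [Finset.mem_union]; rintro (h | h); exacts [hpA h, hpB h]
  have h0ins : (0 : ZMod (2*p)) ∉ insert ((p:ℕ) : ZMod (2*p)) (A ∪ B) := by
    rw [Finset.mem_insert]
    rintro (h | h)
    · exact h0p h
    · rw [Finset.mem_union] at h; rcases h with h | h; exacts [h0A h, h0B h]
  have hcardA : A.card = (p-1)/2 + (p-1)/2 := by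
    rw [hA, Finset.card_union_of_disjoint hD01, QS_card_Dcl hp hpodd hg2,
      QS_card_Dcl hp hpodd hg2]
  have hcardB : B.card = (p-1)/2 + (p-1)/2 := by
    rw [hB, Finset.card_union_of_disjoint hE01, QS_card_Ecl hp hpodd hgodd hg2,
      QS_card_Ecl hp hpodd hgodd hg2]
  have hcardU : U.card = 2*p := by
    rw [hU, Finset.card_insert_of_notMem h0ins, Finset.card_insert_of_notMem hpAB,
      Finset.card_union_of_disjoint hDE, hcardA, hcardB]
    have := Nat.odd_iff.mp hpodd
    omega
  have hUuniv : U = Finset.univ := by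
    apply Finset.eq_univ_of_card
    rw [hcardU, ZMod.card]
  rw [← hUuniv, hU, Finset.sum_insert h0ins, Finset.sum_insert hpAB,
    Finset.sum_union hDE, Finset.sum_union hD01, Finset.sum_union hE01]

end P5

def fcl (p g : ℕ) (x : ZMod (2 * p)) : ZMod 4 :=
  if x = 0 ∨ x ∈ Dcl p g 0 then 0
  else if x ∈ Dcl p g 1 then 1
  else if x = (p : ZMod (2 * p)) ∨ x ∈ Ecl p g 0 then 2
  else 3

lemma seqS_eq_fcl (p g u : ℕ) : seqS p g u = fcl p g (u : ZMod (2*p)) := rfl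

section P6
variable {p g : ℕ}

lemma fcl_zero : fcl p g 0 = 0 := if_pos (Or.inl rfl)

lemma fcl_D0 {x : ZMod (2*p)} (hx : x ∈ Dcl p g 0) : fcl p g x = 0 := if_pos (Or.inr hx)

lemma fcl_D1 (hp : p.Prime) (hpodd : Odd p) (hg2 : orderOf (g : ZMod (2*p)) = p - 1)
    {x : ZMod (2*p)} (hx : x ∈ Dcl p g 1) : fcl p g x = 1 := by
  rw [fcl, if_neg, if_pos hx]
  rintro (rfl | h)
  · exact QS_zero_not_unit hp (QS_Dcl_unit hp hg2 hx)
  · exact Finset.disjoint_left.mp (QS_D0_D1_disj hp hpodd hg2) h hx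

lemma fcl_p (hp : p.Prime) (hg2 : orderOf (g : ZMod (2*p)) = p - 1) :
    fcl p g ((p : ℕ) : ZMod (2*p)) = 2 := by
  rw [fcl, if_neg, if_neg, if_pos (Or.inl rfl)]
  · intro h; exact QS_p_not_unit hp (QS_Dcl_unit hp hg2 h)
  · rintro (h | h)
    · have := congrArg ZMod.val h
      rw [ZMod.val_zero, QS_val_p hp.pos] at this
      exact absurd this (by have := hp.pos; omega)
    · exact QS_p_not_unit hp (QS_Dcl_unit hp hg2 h)

lemma fcl_E0 (hp : p.Prime) (hgodd : Odd g) (hg2 : orderOf (g : ZMod (2*p)) = p - 1)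
    {x : ZMod (2*p)} (hx : x ∈ Ecl p g 0) : fcl p g x = 2 := by
  have hev := QS_Ecl_even hp (i := 0) hx
  rw [fcl, if_neg, if_neg, if_pos (Or.inr hx)]
  · intro h; have := QS_Dcl_odd hp hgodd h; omega
  · rintro (rfl | h)
    · exact QS_Ecl_ne_zero hp hgodd hg2 hx rfl
    · have := QS_Dcl_odd hp hgodd h; omega

lemma fcl_E1 (hp : p.Prime) (hpodd : Odd p) (hgodd : Odd g)
    (hg2 : orderOf (g : ZMod (2*p)) = p - 1)
    {x : ZMod (2*p)} (hx : x ∈ Ecl p g 1) : fcl p g x = 3 := by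
  have hev := QS_Ecl_even hp (i := 1) hx
  rw [fcl, if_neg, if_neg, if_neg]
  · rintro (rfl | h)
    · rw [QS_val_p hp.pos] at hev; have := Nat.odd_iff.mp hpodd; omega
    · exact Finset.disjoint_left.mp (QS_E0_E1_disj hp hpodd hgodd hg2) h hx
  · intro h; have := QS_Dcl_odd hp hgodd h; omega
  · rintro (rfl | h)
    · exact QS_Ecl_ne_zero hp hgodd hg2 hx rfl
    · have := QS_Dcl_odd hp hgodd h; omega

end P6


lemma QS_natDegree_geom {R : Type*} [Semiring R] [Nontrivial R] {n : ℕ} (hn : n ≠ 0) :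
    (∑ i ∈ Finset.range n, (X:R[X])^i).natDegree = n - 1 := by
  apply le_antisymm
  · apply Polynomial.natDegree_sum_le_of_forall_le
    intro i hi
    rw [natDegree_X_pow]
    exact Nat.le_sub_one_of_lt (Finset.mem_range.mp hi)
  · apply le_natDegree_of_ne_zero
    rw [finset_sum_coeff]
    have : ∀ i ∈ Finset.range n, ((X:R[X])^i).coeff (n-1) = if n - 1 = i then 1 else 0 := by
      intro i _
      rw [coeff_X_pow]
    rw [Finset.sum_congr rfl this, Finset.sum_ite_eq (Finset.range n) (n-1) (fun _ => (1:R))]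
    rw [if_pos (Finset.mem_range.mpr (by omega))]
    exact one_ne_zero

section P7
variable {p g : ℕ}

lemma QS_eval_one (hp : p.Prime) (hpodd : Odd p) (hp8 : p % 8 = 3) (hgodd : Odd g)
    (hg2 : orderOf (g : ZMod (2*p)) = p - 1) : (genPoly p g).eval 1 = 0 := by
  haveI : NeZero (2*p) := ⟨by have := hp.pos; omega⟩
  have h1 : (genPoly p g).eval 1 = ∑ u ∈ Finset.range (2*p), fcl p g (u : ZMod (2*p)) := by
    rw [genPoly, eval_finset_sum]
    refine Finset.sum_congr rfl fun u _ => ?_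
    rw [eval_mul, eval_C, eval_pow, eval_X, one_pow, mul_one, seqS_eq_fcl]
  rw [h1, QS_sum_range (fcl p g), QS_sum_univ hp hpodd hgodd hg2 (fcl p g)]
  have hD0 : ∑ x ∈ Dcl p g 0, fcl p g x = 0 := Finset.sum_eq_zero fun x hx => fcl_D0 hx
  have hD1 : ∑ x ∈ Dcl p g 1, fcl p g x = ((p-1)/2 : ℕ) := by
    rw [Finset.sum_congr rfl fun x hx => fcl_D1 hp hpodd hg2 hx, Finset.sum_const,
      QS_card_Dcl hp hpodd hg2, nsmul_eq_mul, mul_one]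
  have hE0 : ∑ x ∈ Ecl p g 0, fcl p g x = ((p-1)/2 : ℕ) * 2 := by
    rw [Finset.sum_congr rfl fun x hx => fcl_E0 hp hgodd hg2 hx, Finset.sum_const,
      QS_card_Ecl hp hpodd hgodd hg2, nsmul_eq_mul]
  have hE1 : ∑ x ∈ Ecl p g 1, fcl p g x = ((p-1)/2 : ℕ) * 3 := by
    rw [Finset.sum_congr rfl fun x hx => fcl_E1 hp hpodd hgodd hg2 hx, Finset.sum_const,
      QS_card_Ecl hp hpodd hgodd hg2, nsmul_eq_mul]
  rw [fcl_zero, fcl_p hp hg2, hD0, hD1, hE0, hE1]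
  have hk : ∃ t, (p-1)/2 = 4*t + 1 := ⟨p/8, by omega⟩
  obtain ⟨t, ht⟩ := hk
  rw [ht]
  push_cast
  rw [show ((4:ZMod 4)) = 0 by decide]
  ring_nf
  decide
end P7

section P8
variable {p g : ℕ}

lemma QS_mem_ub (hp : p.Prime) (hpodd : Odd p) (hp8 : p % 8 = 3) (hgodd : Odd g)
    (hg2 : orderOf (g : ZMod (2*p)) = p - 1) :
    ∃ C : Polynomial (ZMod 4), C.eval 0 = 1 ∧ C.natDegree = 2*p-1 ∧
      (Polynomial.X ^ (2 * p) - 1) ∣ genPoly p g * C := by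
  refine ⟨∑ i ∈ Finset.range (2*p), X^i, ?_, ?_, ?_⟩
  · rw [eval_geom_sum]
    have h : ∀ i ∈ Finset.range (2*p), (0:ZMod 4)^i = if i = 0 then 1 else 0 := by
      intro i _; exact zero_pow_eq i
    rw [Finset.sum_congr rfl h, Finset.sum_ite_eq' (Finset.range (2*p)) 0 (fun _ => (1:ZMod 4))]
    rw [if_pos (Finset.mem_range.mpr (by have := hp.pos; omega))]
  · haveI : Nontrivial (ZMod 4) := ⟨0, 1, by decide⟩
    exact QS_natDegree_geom (by have := hp.pos; omega)
  · obtain ⟨T, hT⟩ := dvd_iff_isRoot.mpr (QS_eval_one hp hpodd hp8 hgodd hg2)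
    refine ⟨T, ?_⟩
    rw [← geom_sum_mul (X : (ZMod 4)[X]) (2*p), hT, map_one]
    ring
end P8


noncomputable def QSphi : ZMod 4 →+* ZMod 2 := ZMod.castHom (show 2 ∣ 4 by norm_num) (ZMod 2)

noncomputable def QSbar (p g : ℕ) : Polynomial (ZMod 2) := (genPoly p g).map QSphi

section P9
variable {p g : ℕ}

lemma QS_Sbar_eq : QSbar p g
    = ∑ u ∈ Finset.range (2*p), C (QSphi (seqS p g u)) * X^u := by
  rw [QSbar, genPoly, Polynomial.map_sum]
  refine Finset.sum_congr rfl fun u _ => ?_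
  rw [Polynomial.map_mul, Polynomial.map_pow, map_C, map_X]

lemma QS_key (hp : p.Prime) (hpodd : Odd p) (hp8 : p % 8 = 3) (hgodd : Odd g)
    (hg1 : orderOf (g : ZMod p) = p - 1)
    (hg2 : orderOf (g : ZMod (2*p)) = p - 1)
    {F : Type*} [Field F] [Algebra (ZMod 2) F]
    {β : F} (hh : ∑ i ∈ Finset.range p, β^i = 0)
    (hs : aeval β (QSbar p g) = 0) : False := by
  classical
  haveI : NeZero (2*p) := ⟨by have := hp.pos; omega⟩
  haveI : NeZero p := ⟨hp.pos.ne'⟩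
  haveI : Fact p.Prime := ⟨hp⟩
  have hpomega : p % 2 = 1 := Nat.odd_iff.mp hpodd
  have h3 : 3 ≤ p := by have := hp.two_le; omega
  set k := (p-1)/2 with hk
  -- char two facts
  have h2F : (2 : F) = 0 := by
    have h : ((2:ℕ) : F) = algebraMap (ZMod 2) F ((2:ℕ) : ZMod 2) := (map_natCast _ 2).symm
    have h0 : ((2:ℕ) : ZMod 2) = 0 := by decide
    rw [h0, map_zero] at h
    exact_mod_cast h
  -- beta facts
  have hβ1 : β ≠ 1 := by
    rintro rfl
    simp only [one_pow, Finset.sum_const, Finset.card_range, nsmul_eq_mul, mul_one] at hh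
    obtain ⟨t, ht⟩ := hpodd
    rw [ht] at hh
    push_cast at hh
    rw [h2F] at hh
    simp at hh
  have hβp : β ^ p = 1 := by
    have := geom_sum_mul β p
    rw [hh, zero_mul] at this
    exact sub_eq_zero.mp this.symm
  -- the ZMod p primitive root
  have hgpunit : IsUnit (g : ZMod p) := QS_unit_of_order hp.two_le hg1
  have hgne : (g : ZMod p) ≠ 0 := hgpunit.ne_zero
  have h2ne : (2 : ZMod p) ≠ 0 := by
    have : ((2:ℕ) : ZMod p) ≠ 0 := by
      rw [Ne, ZMod.natCast_eq_zero_iff]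
      intro h; have := Nat.le_of_dvd (by norm_num) h; omega
    simpa using this
  -- exponent conversion lemmas
  have hgp : ∀ m:ℕ, β^(((g:ZMod (2*p))^m).val) = β^(((g : ZMod p)^m).val) := by
    intro m
    have e1 : ((g:ZMod (2*p))^m) = ((g^m : ℕ) : ZMod (2*p)) := by push_cast; ring
    have e2 : ((g:ZMod p)^m) = ((g^m : ℕ) : ZMod p) := by push_cast; ring
    rw [e1, e2, ZMod.val_natCast, ZMod.val_natCast,
      QS_pow_mod hβp (g^m % (2*p)), Nat.mod_mod_of_dvd _ ⟨2, by ring⟩,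
      ← QS_pow_mod hβp (g^m)]
  have hgp2 : ∀ m:ℕ, β^((2 * (g:ZMod (2*p))^m).val)
      = β^(((2:ZMod p) * (g : ZMod p)^m).val) := by
    intro m
    have e1 : ((g:ZMod (2*p))^m) = ((g^m : ℕ) : ZMod (2*p)) := by push_cast; ring
    have e2 : ((2:ZMod p) * (g:ZMod p)^m) = ((2*g^m : ℕ) : ZMod p) := by push_cast; ring
    rw [QS_val_two_mul hp.pos, e1, e2, ZMod.val_natCast, ZMod.val_natCast,
      QS_pow_mod hβp ((2 * (g ^ m % (2 * p))) % (2*p)),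
      Nat.mod_mod_of_dvd _ ⟨2, by ring⟩]
    congr 1
    have hmm : g ^ m % (2*p) % p = g ^ m % p := Nat.mod_mod_of_dvd _ ⟨2, by ring⟩
    calc 2 * (g ^ m % (2 * p)) % p = 2 % p * (g ^ m % (2*p) % p) % p := by
          rw [Nat.mul_mod]
    _ = 2 % p * (g ^ m % p) % p := by rw [hmm]
    _ = 2 * g ^ m % p := by rw [← Nat.mul_mod]
  -- the two image sets in ZMod p
  set N' : Finset (ZMod p) := (Finset.range k).image (fun n => (g : ZMod p)^(2*n+1)) with hN'
  set Q' : Finset (ZMod p) := (Finset.range k).image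
    (fun n => (2 : ZMod p) * (g : ZMod p)^(2*n+1)) with hQ'
  have hinjN : ∀ n ∈ Finset.range k, ∀ m ∈ Finset.range k,
      (g : ZMod p)^(2*n+1) = (g : ZMod p)^(2*m+1) → n = m := by
    intro n hn m hm h
    exact QS_inj_arith hpodd (Finset.mem_range.mp hn) (Finset.mem_range.mp hm)
      (QS_modeq_of_pow_eq hg1 hgpunit h)
  have hinjQ : ∀ n ∈ Finset.range k, ∀ m ∈ Finset.range k,
      (2:ZMod p) * (g : ZMod p)^(2*n+1) = (2:ZMod p) * (g : ZMod p)^(2*m+1) → n = m := by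
    intro n hn m hm h
    exact hinjN n hn m hm (mul_left_cancel₀ h2ne h)
  have hcardN : N'.card = k := by
    rw [hN', Finset.card_image_of_injOn (fun a ha b hb => hinjN a ha b hb), Finset.card_range]
  have hcardQ : Q'.card = k := by
    rw [hQ', Finset.card_image_of_injOn (fun a ha b hb => hinjQ a ha b hb), Finset.card_range]
  have hdisj : Disjoint N' Q' := by
    rw [Finset.disjoint_left]
    rintro x hxN hxQ
    obtain ⟨n, _, rfl⟩ := Finset.mem_image.mp hxN
    obtain ⟨m, _, hm⟩ := Finset.mem_image.mp hxQ
    -- hm : 2 * g^(2m+1) = g^(2n+1)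
    have hsq : IsSquare (2 : ZMod p) := by
      set b : ZMod p := (g:ZMod p)^(2*m+1) with hbdef
      have hb : b ≠ 0 := pow_ne_zero _ hgne
      set c : ZMod p := (g:ZMod p)^(n+m+1) * b⁻¹ with hcdef
      have key : ((g:ZMod p)^(n+m+1)) * ((g:ZMod p)^(n+m+1)) = 2 * (b * b) := by
        rw [← pow_add]
        have he : n+m+1 + (n+m+1) = (2*n+1) + (2*m+1) := by omega
        rw [he, pow_add, ← hm, hbdef]
        ring
      have hbinv : b * b⁻¹ = 1 := mul_inv_cancel₀ hb
      have hcc : c * c = 2 := by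
        calc c * c = ((g:ZMod p)^(n+m+1) * (g:ZMod p)^(n+m+1)) * (b⁻¹ * b⁻¹) := by
              rw [hcdef]; ring
        _ = 2 * (b * b) * (b⁻¹ * b⁻¹) := by rw [key]
        _ = 2 * ((b * b⁻¹) * (b * b⁻¹)) := by ring
        _ = 2 := by rw [hbinv]; ring
      exact ⟨c, hcc.symm⟩
    rw [ZMod.exists_sq_eq_two_iff (by omega)] at hsq
    omega
  have hsub : N' ∪ Q' ⊆ Finset.univ.erase 0 := by
    intro x hx
    rw [Finset.mem_erase]
    refine ⟨?_, Finset.mem_univ x⟩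
    rcases Finset.mem_union.mp hx with h | h
    · obtain ⟨n, _, rfl⟩ := Finset.mem_image.mp h
      exact pow_ne_zero _ hgne
    · obtain ⟨n, _, rfl⟩ := Finset.mem_image.mp h
      exact mul_ne_zero h2ne (pow_ne_zero _ hgne)
  have hNQ : N' ∪ Q' = Finset.univ.erase 0 := by
    apply Finset.eq_of_subset_of_card_le hsub
    rw [Finset.card_erase_of_mem (Finset.mem_univ 0), Finset.card_union_of_disjoint hdisj,
      hcardN, hcardQ, Finset.card_univ, ZMod.card]
    omega
  -- evaluation of Sbar at β as a sum over ZMod (2p)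
  set G : ZMod (2*p) → F :=
    fun x => algebraMap (ZMod 2) F (QSphi (fcl p g x)) * β^(x.val) with hG
  have hev : aeval β (QSbar p g) = ∑ x : ZMod (2*p), G x := by
    rw [QS_Sbar_eq, map_sum]
    rw [← QS_sum_range G]
    refine Finset.sum_congr rfl fun u hu => ?_
    rw [map_mul, aeval_C, map_pow, aeval_X, hG]
    simp only []
    rw [seqS_eq_fcl, ZMod.val_natCast, Nat.mod_eq_of_lt (Finset.mem_range.mp hu)]
  rw [hev, QS_sum_univ hp hpodd hgodd hg2 G] at hs
  -- evaluate G on the pieces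
  have hphi0 : QSphi 0 = 0 := map_zero QSphi
  have hphi1 : QSphi 1 = 1 := map_one QSphi
  have hphi2 : QSphi 2 = 0 := by
    have h : (2 : ZMod 4) = 1 + 1 := by decide
    rw [h, map_add, map_one]; decide
  have hphi3 : QSphi 3 = 1 := by
    have h : (3 : ZMod 4) = 1 + 1 + 1 := by decide
    rw [h, map_add, map_add, map_one]; decide
  have hG0 : G 0 = 0 := by rw [hG]; simp only [fcl_zero, hphi0, map_zero, zero_mul]
  have hGp : G ((p:ℕ) : ZMod (2*p)) = 0 := by
    rw [hG]; simp only [fcl_p hp hg2, hphi2, map_zero, zero_mul]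
  have hGD0 : ∑ x ∈ Dcl p g 0, G x = 0 :=
    Finset.sum_eq_zero fun x hx => by
      rw [hG]; simp only [fcl_D0 hx, hphi0, map_zero, zero_mul]
  have hGE0 : ∑ x ∈ Ecl p g 0, G x = 0 :=
    Finset.sum_eq_zero fun x hx => by
      rw [hG]; simp only [fcl_E0 hp hgodd hg2 hx, hphi2, map_zero, zero_mul]
  have hGD1 : ∑ x ∈ Dcl p g 1, G x = ∑ y ∈ N', β^(y.val) := by
    rw [Dcl, Finset.sum_image (fun a ha b hb h => QS_Dcl_injOn hp hpodd hg2 1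
      (Finset.mem_range.mp ha) (Finset.mem_range.mp hb) h),
      hN', Finset.sum_image hinjN]
    refine Finset.sum_congr rfl fun n hn => ?_
    have hmem : (g : ZMod (2*p))^(2*n+1) ∈ Dcl p g 1 :=
      Finset.mem_image.mpr ⟨n, hn, rfl⟩
    rw [hG]
    simp only [fcl_D1 hp hpodd hg2 hmem, hphi1, map_one, one_mul]
    exact hgp (2*n+1)
  have hGE1 : ∑ x ∈ Ecl p g 1, G x = ∑ y ∈ Q', β^(y.val) := by
    have hinj2p : ∀ a ∈ Dcl p g 1, ∀ b ∈ Dcl p g 1, 2*a = 2*b → a = b :=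
      fun a ha b hb h => QS_double_inj hp hpodd (QS_Dcl_odd hp hgodd ha)
        (QS_Dcl_odd hp hgodd hb) h
    rw [Ecl, Finset.sum_image hinj2p, Dcl, Finset.sum_image (fun a ha b hb h =>
      QS_Dcl_injOn hp hpodd hg2 1 (Finset.mem_range.mp ha) (Finset.mem_range.mp hb) h),
      hQ', Finset.sum_image hinjQ]
    refine Finset.sum_congr rfl fun n hn => ?_
    have hmem : 2 * (g : ZMod (2*p))^(2*n+1) ∈ Ecl p g 1 :=
      Finset.mem_image.mpr ⟨_, Finset.mem_image.mpr ⟨n, hn, rfl⟩, rfl⟩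
    rw [hG]
    simp only [fcl_E1 hp hpodd hgodd hg2 hmem, hphi3, map_one, one_mul]
    exact hgp2 (2*n+1)
  rw [hG0, hGp, hGD0, hGD1, hGE0, hGE1] at hs
  simp only [zero_add, add_zero] at hs
  -- now hs : ∑ y ∈ N', β^y.val + ∑ y ∈ Q', β^y.val = 0
  have hsum : ∑ y ∈ N', β^(y.val) + ∑ y ∈ Q', β^(y.val)
      = ∑ y ∈ Finset.univ.erase (0 : ZMod p), β^(y.val) := by
    rw [← Finset.sum_union hdisj, hNQ]
  have huniv : ∑ y : ZMod p, β^(y.val) = 0 := by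
    rw [← QS_sum_range (fun y : ZMod p => β^(y.val))]
    rw [← hh]
    refine Finset.sum_congr rfl fun u hu => ?_
    rw [ZMod.val_natCast, Nat.mod_eq_of_lt (Finset.mem_range.mp hu)]
  have hsplit := Finset.add_sum_erase Finset.univ (fun y : ZMod p => β^(y.val))
    (Finset.mem_univ 0)
  rw [huniv] at hsplit
  simp only [ZMod.val_zero, pow_zero] at hsplit
  rw [hsum] at hs
  rw [hs] at hsplit
  -- hsplit : 1 + 0 = 0
  rw [add_zero] at hsplit
  exact one_ne_zero hsplit
end P9

section P10
variable {p g : ℕ}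

lemma QS_hbar_ne_zero (hp : 0 < p) : (∑ i ∈ Finset.range p, (X:(ZMod 2)[X])^i) ≠ 0 :=
  (monic_geom_sum_X (by omega)).ne_zero

lemma QS_coprime (hp : p.Prime) (hpodd : Odd p) (hp8 : p % 8 = 3) (hgodd : Odd g)
    (hg1 : orderOf (g : ZMod p) = p - 1)
    (hg2 : orderOf (g : ZMod (2*p)) = p - 1) :
    IsCoprime (∑ i ∈ Finset.range p, (X:(ZMod 2)[X])^i) (QSbar p g) := by
  classical
  by_contra hnc
  rw [← EuclideanDomain.gcd_isUnit_iff] at hnc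
  set d := EuclideanDomain.gcd (∑ i ∈ Finset.range p, (X:(ZMod 2)[X])^i) (QSbar p g) with hd
  have hd1 : d ∣ _ := EuclideanDomain.gcd_dvd_left (∑ i ∈ Finset.range p, (X:(ZMod 2)[X])^i) (QSbar p g)
  have hd2 : d ∣ QSbar p g := EuclideanDomain.gcd_dvd_right _ _
  have hdne : d ≠ 0 := by
    intro h
    rw [h] at hd1
    exact QS_hbar_ne_zero hp.pos (zero_dvd_iff.mp hd1)
  obtain ⟨q, hqirr, hqd⟩ := WfDvdMonoid.exists_irreducible_factor hnc hdne
  haveI := Fact.mk hqirr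
  set β : AdjoinRoot q := AdjoinRoot.root q with hβ
  have hroot : aeval β q = 0 := by
    rw [hβ, AdjoinRoot.aeval_eq, AdjoinRoot.mk_self]
  have hβh : aeval β (∑ i ∈ Finset.range p, (X:(ZMod 2)[X])^i) = 0 :=
    aeval_eq_zero_of_dvd_aeval_eq_zero (hqd.trans hd1) hroot
  have hβs : aeval β (QSbar p g) = 0 :=
    aeval_eq_zero_of_dvd_aeval_eq_zero (hqd.trans hd2) hroot
  have hβh' : ∑ i ∈ Finset.range p, β^i = 0 := by
    rw [← hβh, map_sum]
    exact Finset.sum_congr rfl fun i _ => by rw [map_pow, aeval_X]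
  exact QS_key hp hpodd hp8 hgodd hg1 hg2 hβh' hβs

lemma QS_not_sq_dvd (hp : p.Prime) (hpodd : Odd p) (hp8 : p % 8 = 3) (hgodd : Odd g)
    (hg2 : orderOf (g : ZMod (2*p)) = p - 1) :
    ¬ ((X - 1 : (ZMod 2)[X])^2 ∣ QSbar p g) := by
  haveI : NeZero (2*p) := ⟨by have := hp.pos; omega⟩
  intro hdvd
  obtain ⟨t, ht⟩ := hdvd
  have hder : eval 1 (derivative (QSbar p g)) = 0 := by
    rw [ht, derivative_mul, derivative_pow]
    simp
  have hcomp : eval 1 (derivative (QSbar p g)) = (((p-1)/2 : ℕ) : ZMod 2) := by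
    rw [QS_Sbar_eq, derivative_sum]
    have hterm : ∀ u ∈ Finset.range (2*p),
        eval 1 (derivative (C (QSphi (seqS p g u)) * X^u))
          = QSphi (fcl p g (u : ZMod (2*p))) * (((u : ZMod (2*p)).val : ℕ) : ZMod 2) := by
      intro u hu
      rw [derivative_C_mul, derivative_X_pow, eval_mul, eval_C, eval_mul, eval_C,
        eval_pow, eval_X, one_pow, mul_one, seqS_eq_fcl,
        ZMod.val_natCast, Nat.mod_eq_of_lt (Finset.mem_range.mp hu)]
    rw [eval_finset_sum, Finset.sum_congr rfl hterm,
      QS_sum_range (fun x : ZMod (2*p) => QSphi (fcl p g x) * ((x.val : ℕ) : ZMod 2)),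
      QS_sum_univ hp hpodd hgodd hg2]
    have hphi0 : QSphi 0 = 0 := map_zero QSphi
    have hphi2 : QSphi 2 = 0 := by
      have h : (2 : ZMod 4) = 1 + 1 := by decide
      rw [h, map_add, map_one]; decide
    have hcast : ∀ x : ZMod (2*p), ((x.val : ℕ) : ZMod 2) = ((x.val % 2 : ℕ) : ZMod 2) := by
      intro x; rw [ZMod.natCast_mod]
    have hD0 : ∑ x ∈ Dcl p g 0, QSphi (fcl p g x) * ((x.val : ℕ) : ZMod 2) = 0 :=
      Finset.sum_eq_zero fun x hx => by rw [fcl_D0 hx, hphi0, zero_mul]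
    have hE0 : ∑ x ∈ Ecl p g 0, QSphi (fcl p g x) * ((x.val : ℕ) : ZMod 2) = 0 :=
      Finset.sum_eq_zero fun x hx => by rw [fcl_E0 hp hgodd hg2 hx, hphi2, zero_mul]
    have hE1 : ∑ x ∈ Ecl p g 1, QSphi (fcl p g x) * ((x.val : ℕ) : ZMod 2) = 0 :=
      Finset.sum_eq_zero fun x hx => by
        rw [hcast x, QS_Ecl_even hp hx]
        simp
    have hD1 : ∑ x ∈ Dcl p g 1, QSphi (fcl p g x) * ((x.val : ℕ) : ZMod 2)
        = (((p-1)/2 : ℕ) : ZMod 2) := by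
      have : ∀ x ∈ Dcl p g 1, QSphi (fcl p g x) * ((x.val : ℕ) : ZMod 2) = 1 := by
        intro x hx
        have hphi1 : QSphi 1 = 1 := map_one QSphi
        rw [fcl_D1 hp hpodd hg2 hx, hphi1, one_mul, hcast x, QS_Dcl_odd hp hgodd hx]
        decide
      rw [Finset.sum_congr rfl this, Finset.sum_const, QS_card_Dcl hp hpodd hg2,
        nsmul_eq_mul, mul_one]
    rw [fcl_zero, fcl_p hp hg2, hphi0, hphi2, hD0, hD1, hE0, hE1]
    ring
  rw [hcomp] at hder
  have hk : ∃ t, (p-1)/2 = 2*t + 1 := ⟨(p-3)/4, by omega⟩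
  obtain ⟨t, ht⟩ := hk
  rw [ht] at hder
  push_cast at hder
  rw [show ((2:ZMod 2)) = 0 by decide] at hder
  simp at hder
end P10

section P11
variable {p g : ℕ}

lemma QS_factor (p : ℕ) : ((X:(ZMod 2)[X])^(2*p) - 1)
    = (X - 1)^2 * (∑ i ∈ Finset.range p, (X:(ZMod 2)[X])^i)^2 := by
  have h1 : (∑ i ∈ Finset.range p, (X:(ZMod 2)[X])^i) * (X - 1) = X^p - 1 := geom_sum_mul _ p
  have h2 : (2 : (ZMod 2)[X]) = 0 := by
    have : (2:(ZMod 2)[X]) = C (2:ZMod 2) := (map_ofNat Polynomial.C 2).symm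
    rw [this, show (2:ZMod 2) = 0 by decide, map_zero]
  have h3 : ((X:(ZMod 2)[X]) - 1)^2 * (∑ i ∈ Finset.range p, (X:(ZMod 2)[X])^i)^2
      = ((X:(ZMod 2)[X])^p - 1)^2 := by rw [← h1]; ring
  rw [h3]
  linear_combination ((X:(ZMod 2)[X])^p - 1) * h2

lemma QS_lb (hp : p.Prime) (hpodd : Odd p) (hp8 : p % 8 = 3) (hgodd : Odd g)
    (hg1 : orderOf (g : ZMod p) = p - 1)
    (hg2 : orderOf (g : ZMod (2*p)) = p - 1)
    (C : Polynomial (ZMod 4)) (hC0 : C.eval 0 = 1)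
    (hdvd : (X^(2*p) - 1 : (ZMod 4)[X]) ∣ genPoly p g * C) :
    2*p - 1 ≤ C.natDegree := by
  classical
  set hb : (ZMod 2)[X] := ∑ i ∈ Finset.range p, (X:(ZMod 2)[X])^i with hbdef
  set Cb : (ZMod 2)[X] := C.map QSphi with hCbdef
  have hCb0 : Cb.eval 0 = 1 := by
    rw [← coeff_zero_eq_eval_zero, hCbdef, coeff_map, coeff_zero_eq_eval_zero, hC0, map_one]
  have hCbne : Cb ≠ 0 := by
    intro h; rw [h] at hCb0; simp at hCb0
  have hmapdvd : ((X:(ZMod 2)[X])^(2*p) - 1) ∣ QSbar p g * Cb := by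
    obtain ⟨T, hT⟩ := hdvd
    refine ⟨T.map QSphi, ?_⟩
    have h := congrArg (Polynomial.map QSphi) hT
    rw [Polynomial.map_mul, Polynomial.map_mul, Polynomial.map_sub, Polynomial.map_pow,
      map_X, Polynomial.map_one] at h
    exact h
  rw [QS_factor p] at hmapdvd
  have hXsub : (X - 1 : (ZMod 2)[X]) = X - Polynomial.C 1 := by rw [map_one]
  have hirr : Irreducible (X - 1 : (ZMod 2)[X]) := by
    rw [hXsub]; exact irreducible_X_sub_C 1
  have hXdvd1 : ((X-1:(ZMod 2)[X]))^2 ∣ QSbar p g * Cb :=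
    dvd_trans (Dvd.intro _ rfl) hmapdvd
  have hbdvd1 : hb^2 ∣ QSbar p g * Cb :=
    dvd_trans (Dvd.intro_left _ rfl) hmapdvd
  -- step 1 : (X-1) ∣ Cb
  have hXC : (X - 1 : (ZMod 2)[X]) ∣ Cb := by
    by_contra hXC
    have hco : IsCoprime (X - 1 : (ZMod 2)[X]) Cb := (hirr.coprime_iff_not_dvd).mpr hXC
    have hco2 : IsCoprime ((X - 1 : (ZMod 2)[X])^2) Cb := hco.pow_left
    exact QS_not_sq_dvd hp hpodd hp8 hgodd hg2 (hco2.dvd_of_dvd_mul_right hXdvd1)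
  -- step 2 : hb^2 ∣ Cb
  have hbco : IsCoprime hb (QSbar p g) := QS_coprime hp hpodd hp8 hgodd hg1 hg2
  have hb2C : hb^2 ∣ Cb := (hbco.pow_left).dvd_of_dvd_mul_left hbdvd1
  -- step 3 : coprime (X-1) hb^2 and combine
  have hXhb : IsCoprime (X - 1 : (ZMod 2)[X]) (hb^2) := by
    refine (hirr.coprime_iff_not_dvd.mpr ?_).pow_right
    rw [hXsub, dvd_iff_isRoot, IsRoot, hbdef, eval_geom_sum]
    simp only [one_pow, Finset.sum_const, Finset.card_range, nsmul_eq_mul, mul_one]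
    obtain ⟨t, ht⟩ := hpodd
    rw [ht]
    push_cast
    rw [show ((2:ZMod 2)) = 0 by decide]
    simp
  have hfull : (X - 1 : (ZMod 2)[X]) * hb^2 ∣ Cb := hXhb.mul_dvd hXC hb2C
  have hdeg : ((X - 1 : (ZMod 2)[X]) * hb^2).natDegree = 2*p - 1 := by
    have hbne : hb ≠ 0 := QS_hbar_ne_zero hp.pos
    have hXne : (X - 1 : (ZMod 2)[X]) ≠ 0 := hirr.ne_zero
    rw [natDegree_mul hXne (pow_ne_zero 2 hbne), natDegree_pow, hXsub, natDegree_X_sub_C,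
      hbdef, QS_natDegree_geom hp.pos.ne']
    have := hp.two_le
    omega
  have hle1 : 2*p - 1 ≤ Cb.natDegree := by
    rw [← hdeg]
    exact natDegree_le_of_dvd hfull hCbne
  exact hle1.trans natDegree_map_le

end P11


theorem stmt1 (p g : ℕ) (hp : p.Prime) (hpodd : Odd p) (hp8 : p % 8 = 3)
    (hgodd : Odd g)
    (hg1 : orderOf (g : ZMod p) = p - 1)
    (hg2 : orderOf (g : ZMod (2 * p)) = p - 1) :
    linComplexity p g = 2 * p - 1 := by
  have hub := QS_mem_ub hp hpodd hp8 hgodd hg2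
  have hmem : (2*p - 1) ∈ { L | ∃ C : Polynomial (ZMod 4), C.eval 0 = 1 ∧ C.natDegree = L ∧
      (Polynomial.X ^ (2 * p) - 1) ∣ genPoly p g * C } := hub
  apply le_antisymm
  · exact Nat.sInf_le hmem
  · have hmem' := Nat.sInf_mem ⟨2*p - 1, hmem⟩
    obtain ⟨C, hC0, hCdeg, hCdvd⟩ := hmem'
    rw [linComplexity, ← hCdeg]
    exact QS_lb hp hpodd hp8 hgodd hg1 hg2 C hC0 hCdvd
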